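/- Let E be a finite extension of ℚ_p and D a disk in the algebraic closure of ℚ_p invariant under G_E. If there exists a finite unramified extension F of E with F ∩ D nonempty, then E ∩ D is nonempty. -/

import Mathlib

set_option synthInstance.maxHeartbeats 1000000
set_option maxHeartbeats 1000000
set_option linter.unusedVariables false
set_option linter.unusedSectionVars false
set_option linter.unnecessarySimpa false

open Polynomial IsUltrametricDist

/-- A (rational, open or closed) disk in `Cp` with positive radius. -/
def IsDisk {Cp : Type*} [NormedField Cp] (D : Set Cp) : Prop :=
  ∃ (a : Cp) (r : ℝ), 0 < r ∧
    (D = {x | ‖x - a‖ ≤ r} ∨ D = {x | ‖x - a‖ < r})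

/-- The value group `‖E^×‖` of an intermediate field `E` of `Cp / ℚ_p`, as a subgroup of
`ℝˣ`. -/
noncomputable def valueGroup (p : ℕ) [Fact p.Prime] (Cp : Type*) [NormedField Cp]
    [Algebra ℚ_[p] Cp] (E : IntermediateField ℚ_[p] Cp) : Subgroup ℝˣ :=
  Subgroup.closure {u : ℝˣ | ∃ x : Cp, x ∈ E ∧ (u : ℝ) = ‖x‖}

/-- The ramification index `e_{F/E}` of an extension `E ≤ F` of finite extensions of
`ℚ_p` inside `Cp`, defined as the index of the value group of `E` inside that of `F`. -/
noncomputable def ramIdx (p : ℕ) [Fact p.Prime] (Cp : Type*) [NormedField Cp]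
    [Algebra ℚ_[p] Cp] (E F : IntermediateField ℚ_[p] Cp) : ℕ :=
  (valueGroup p Cp E).relIndex (valueGroup p Cp F)

section Aux
variable {p : ℕ} [Fact p.Prime] {Cp : Type*} [NormedField Cp] [IsUltrametricDist Cp]
  [Algebra ℚ_[p] Cp]

lemma aux_le_of_pow_le {a b C : ℝ} (ha : 0 ≤ a) (hb : 0 ≤ b) (hC : 0 < C)
    (h : ∀ n : ℕ, 0 < n → b ^ n ≤ C * a ^ n) : b ≤ a := by
  rcases eq_or_lt_of_le ha with rfl | ha'
  · have := h 1 one_pos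
    simpa using this
  by_contra hab
  push_neg at hab
  have hr : 1 < b / a := (one_lt_div ha').mpr hab
  obtain ⟨n, hn⟩ := pow_unbounded_of_one_lt C hr
  have h2 := h (n + 1) (Nat.succ_pos n)
  have h3 : C < (b / a) ^ (n + 1) :=
    lt_of_lt_of_le hn (pow_le_pow_right₀ hr.le (Nat.le_succ n))
  have h4 : C * a ^ (n + 1) < b ^ (n + 1) := by
    have := (mul_lt_mul_of_pos_right h3 (pow_pos ha' (n + 1)))
    rwa [div_pow, div_mul_cancel₀] at this
    exact ne_of_gt (pow_pos ha' (n + 1))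
  linarith

lemma aux_norm_algHom (halg : Algebra.IsAlgebraic ℚ_[p] Cp)
    (hnorm : ∀ x : ℚ_[p], ‖algebraMap ℚ_[p] Cp x‖ = ‖x‖)
    (σ : Cp →ₐ[ℚ_[p]] Cp) (z : Cp) : ‖σ z‖ ≤ ‖z‖ := by
  letI : NormedSpace ℚ_[p] Cp :=
    { norm_smul_le := fun c x => by rw [Algebra.smul_def, norm_mul, hnorm] }
  have hint : IsIntegral ℚ_[p] z := (halg.isAlgebraic z).isIntegral
  haveI : FiniteDimensional ℚ_[p] ↥(IntermediateField.adjoin ℚ_[p] {z}) :=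
    IntermediateField.adjoin.finiteDimensional hint
  set V : Submodule ℚ_[p] Cp :=
    Subalgebra.toSubmodule (IntermediateField.adjoin ℚ_[p] {z}).toSubalgebra with hV
  haveI : FiniteDimensional ℚ_[p] ↥V :=
    inferInstanceAs (FiniteDimensional ℚ_[p] ↥(IntermediateField.adjoin ℚ_[p] {z}))
  let L : ↥V →ₗ[ℚ_[p]] Cp := σ.toLinearMap.comp V.subtype
  have hL : Continuous L := L.continuous_of_finiteDimensional
  let Lc : ↥V →L[ℚ_[p]] Cp := ⟨L, hL⟩
  set C : ℝ := max ‖Lc‖ 1 with hCdef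
  have hC : 0 < C := lt_of_lt_of_le one_pos (le_max_right _ _)
  have key : ∀ n : ℕ, 0 < n → ‖σ z‖ ^ n ≤ C * ‖z‖ ^ n := by
    intro n hn
    have hzn : z ^ n ∈ V := by
      simp only [hV, Subalgebra.mem_toSubmodule, IntermediateField.mem_toSubalgebra]
      exact pow_mem (IntermediateField.mem_adjoin_simple_self ℚ_[p] z) n
    have h1 : ‖σ z‖ ^ n = ‖Lc ⟨z ^ n, hzn⟩‖ := by
      have : Lc ⟨z ^ n, hzn⟩ = σ (z ^ n) := rfl
      rw [this, map_pow, norm_pow]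
    have h2 : ‖Lc ⟨z ^ n, hzn⟩‖ ≤ ‖Lc‖ * ‖(⟨z ^ n, hzn⟩ : ↥V)‖ := Lc.le_opNorm _
    have h3 : ‖(⟨z ^ n, hzn⟩ : ↥V)‖ = ‖z‖ ^ n := by
      rw [show ‖(⟨z ^ n, hzn⟩ : ↥V)‖ = ‖z ^ n‖ from rfl, norm_pow]
    rw [h1, ← h3]
    calc ‖Lc ⟨z ^ n, hzn⟩‖ ≤ ‖Lc‖ * ‖(⟨z ^ n, hzn⟩ : ↥V)‖ := h2
    _ ≤ C * ‖(⟨z ^ n, hzn⟩ : ↥V)‖ :=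
        mul_le_mul_of_nonneg_right (le_max_left _ _) (norm_nonneg _)
  exact aux_le_of_pow_le (norm_nonneg z) (norm_nonneg _) hC key

lemma aux_norm_equiv (halg : Algebra.IsAlgebraic ℚ_[p] Cp)
    (hnorm : ∀ x : ℚ_[p], ‖algebraMap ℚ_[p] Cp x‖ = ‖x‖)
    (σ : Cp ≃ₐ[ℚ_[p]] Cp) (z : Cp) : ‖σ z‖ = ‖z‖ := by
  refine le_antisymm (aux_norm_algHom halg hnorm σ.toAlgHom z) ?_
  have := aux_norm_algHom halg hnorm σ.symm.toAlgHom (σ z)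
  simpa using this

lemma aux_exists_min (hnorm : ∀ x : ℚ_[p], ‖algebraMap ℚ_[p] Cp x‖ = ‖x‖)
    (E : IntermediateField ℚ_[p] Cp) [FiniteDimensional ℚ_[p] ↥E] (x : Cp) :
    ∃ y, y ∈ E ∧ ∀ e ∈ E, ‖x - y‖ ≤ ‖x - e‖ := by
  letI : NormedSpace ℚ_[p] Cp :=
    { norm_smul_le := fun c x => by rw [Algebra.smul_def, norm_mul, hnorm] }
  set V : Submodule ℚ_[p] Cp := Subalgebra.toSubmodule E.toSubalgebra with hV
  haveI : FiniteDimensional ℚ_[p] ↥V := inferInstanceAs (FiniteDimensional ℚ_[p] ↥E)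
  haveI : ProperSpace ↥V := FiniteDimensional.proper ℚ_[p] ↥V
  have hcont : ContinuousOn (fun v : ↥V => ‖x - ↑v‖) (Metric.closedBall 0 (2 * ‖x‖ + 1)) :=
    ((continuous_const.sub continuous_subtype_val).norm).continuousOn
  obtain ⟨v₀, hv₀mem, hv₀⟩ :=
    (isCompact_closedBall (0 : ↥V) (2 * ‖x‖ + 1)).exists_isMinOn
      ⟨0, Metric.mem_closedBall_self (by positivity)⟩ hcont
  refine ⟨↑v₀, ?_, ?_⟩
  · have := v₀.2
    simpa only [hV, Subalgebra.mem_toSubmodule, IntermediateField.mem_toSubalgebra] using this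
  · intro e he
    have heV : e ∈ V := by
      simp only [hV, Subalgebra.mem_toSubmodule, IntermediateField.mem_toSubalgebra]
      exact he
    by_cases hball : (⟨e, heV⟩ : ↥V) ∈ Metric.closedBall (0 : ↥V) (2 * ‖x‖ + 1)
    · exact hv₀ hball
    · have h0 : ‖x - ↑v₀‖ ≤ ‖x‖ := by
        have := hv₀ (Metric.mem_closedBall_self (show (0:ℝ) ≤ 2 * ‖x‖ + 1 by positivity))
        simpa using this
      have he' : 2 * ‖x‖ + 1 < ‖e‖ := by
        simp only [Metric.mem_closedBall, dist_zero_right, not_le] at hball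
        calc 2 * ‖x‖ + 1 < ‖(⟨e, heV⟩ : ↥V)‖ := hball
        _ = ‖e‖ := rfl
      have : ‖e‖ - ‖x‖ ≤ ‖x - e‖ := by
        have h := norm_sub_norm_le e x
        rwa [norm_sub_rev] at h
      calc ‖x - ↑v₀‖ ≤ ‖x‖ := h0
      _ ≤ ‖x - e‖ := by linarith [norm_nonneg x]
end Aux

section Aux2
variable {p : ℕ} [Fact p.Prime] {Cp : Type*} [NormedField Cp] [IsUltrametricDist Cp]
  [Algebra ℚ_[p] Cp]

lemma aux_valueGroup (E F : IntermediateField ℚ_[p] Cp)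
    (hle : valueGroup p Cp F ≤ valueGroup p Cp E)
    {z : Cp} (hz : z ∈ F) (hz0 : z ≠ 0) : ∃ c, c ∈ E ∧ ‖c‖ = ‖z‖ := by
  set S : Subgroup ℝˣ :=
    { carrier := {u : ℝˣ | ∃ c : Cp, c ∈ E ∧ (u : ℝ) = ‖c‖}
      one_mem' := ⟨1, one_mem E, by simp⟩
      mul_mem' := by
        rintro u v ⟨c, hc, hcu⟩ ⟨d, hd, hdv⟩
        exact ⟨c * d, mul_mem hc hd, by rw [Units.val_mul, hcu, hdv, norm_mul]⟩
      inv_mem' := by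
        rintro u ⟨c, hc, hcu⟩
        have hc0 : c ≠ 0 := by
          intro h
          rw [h, norm_zero] at hcu
          exact u.ne_zero hcu
        exact ⟨c⁻¹, inv_mem hc, by rw [norm_inv, ← hcu]; exact Units.val_inv_eq_inv_val u⟩ } with hS
  have hES : valueGroup p Cp E ≤ S := by
    apply (Subgroup.closure_le S).mpr
    intro u hu
    exact hu
  have hz' : ‖z‖ ≠ 0 := norm_ne_zero_iff.mpr hz0
  set u : ℝˣ := Units.mk0 ‖z‖ hz' with hu
  have huF : u ∈ valueGroup p Cp F := Subgroup.subset_closure ⟨z, hz, rfl⟩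
  obtain ⟨c, hcE, hcu⟩ := hES (hle huF)
  exact ⟨c, hcE, by rw [← hcu]; rfl⟩

end Aux2

section Poly
variable {Cp : Type*} [NormedField Cp] [IsUltrametricDist Cp]

lemma aux_nsub_le_max (x y : Cp) : ‖x - y‖ ≤ max ‖x‖ ‖y‖ := by
  rw [sub_eq_add_neg]
  refine le_trans (norm_add_le_max _ _) ?_
  rw [norm_neg]
-- coefficients of products of (X - ρ) with ‖ρ‖ ≤ 1 are bounded by 1
lemma aux_coeff_le (s : Multiset Cp) (hs : ∀ ρ ∈ s, ‖ρ‖ ≤ 1) (k : ℕ) :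
    ‖((s.map (fun ρ => X - C ρ)).prod).coeff k‖ ≤ 1 := by
  induction s using Multiset.induction generalizing k with
  | empty =>
    simp only [Multiset.map_zero, Multiset.prod_zero, coeff_one]
    split <;> simp
  | cons ρ s ih =>
    have hρ : ‖ρ‖ ≤ 1 := hs ρ (Multiset.mem_cons_self ρ s)
    have hs' : ∀ ρ' ∈ s, ‖ρ'‖ ≤ 1 := fun ρ' h => hs ρ' (Multiset.mem_cons_of_mem h)
    rw [Multiset.map_cons, Multiset.prod_cons, sub_mul]
    set A := ((s.map (fun ρ => X - C ρ)).prod) with hA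
    rw [coeff_sub, coeff_C_mul]
    refine le_trans (aux_nsub_le_max _ _) (max_le ?_ ?_)
    · cases k with
      | zero => simp [coeff_X_mul_zero]
      | succ k => rw [coeff_X_mul]; exact ih hs' k
    · rw [norm_mul]
      exact mul_le_one₀ hρ (norm_nonneg _) (ih hs' k)

lemma aux_coeff_close (w : Cp) (hw : ‖w‖ ≤ 1) (s : Multiset Cp)
    (hs : ∀ ρ ∈ s, ‖ρ‖ ≤ 1 ∧ ‖ρ - w‖ < 1) (k : ℕ) :
    ‖((s.map (fun ρ => X - C ρ)).prod).coeff k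
      - ((X - C w) ^ (Multiset.card s)).coeff k‖ < 1 := by
  induction s using Multiset.induction generalizing k with
  | empty => simp
  | cons ρ s ih =>
    obtain ⟨hρ1, hρw⟩ := hs ρ (Multiset.mem_cons_self ρ s)
    have hs' : ∀ ρ' ∈ s, ‖ρ'‖ ≤ 1 ∧ ‖ρ' - w‖ < 1 :=
      fun ρ' h => hs ρ' (Multiset.mem_cons_of_mem h)
    rw [Multiset.map_cons, Multiset.prod_cons, Multiset.card_cons, pow_succ']
    set A := ((s.map (fun ρ => X - C ρ)).prod) with hA
    set B := ((X - C w) ^ (Multiset.card s)) with hB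
    have hBle : ∀ j, ‖B.coeff j‖ ≤ 1 := by
      intro j
      have : B = ((Multiset.replicate (Multiset.card s) w).map (fun ρ => X - C ρ)).prod := by
        rw [Multiset.map_replicate, Multiset.prod_replicate]
      rw [this]
      exact aux_coeff_le _ (fun ρ' h => by
        rw [Multiset.eq_of_mem_replicate h]; exact hw) j
    have key : (X - C ρ) * A - (X - C w) * B
        = (X * (A - B) - C ρ * (A - B)) + C (w - ρ) * B := by rw [map_sub]; ring
    rw [← coeff_sub, key, coeff_add, coeff_sub, coeff_C_mul, coeff_C_mul]
    have h1 : ‖(X * (A - B)).coeff k‖ < 1 := by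
      cases k with
      | zero => simpa [coeff_X_mul_zero] using one_pos
      | succ k => rw [coeff_X_mul]; rw [coeff_sub]; exact ih hs' k
    have h2 : ‖ρ * (A - B).coeff k‖ < 1 := by
      rw [norm_mul]
      have := ih hs' k
      rw [← coeff_sub] at this
      calc ‖ρ‖ * ‖(A - B).coeff k‖ ≤ 1 * ‖(A - B).coeff k‖ :=
        mul_le_mul_of_nonneg_right hρ1 (norm_nonneg _)
      _ = ‖(A - B).coeff k‖ := one_mul _
      _ < 1 := this
    have h3 : ‖(w - ρ) * B.coeff k‖ < 1 := by
      rw [norm_mul]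
      have hwρ : ‖w - ρ‖ < 1 := by rwa [norm_sub_rev]
      calc ‖w - ρ‖ * ‖B.coeff k‖ ≤ ‖w - ρ‖ * 1 :=
        mul_le_mul_of_nonneg_left (hBle k) (norm_nonneg _)
      _ = ‖w - ρ‖ := mul_one _
      _ < 1 := hwρ
    calc ‖(X * (A - B)).coeff k - ρ * (A - B).coeff k + (w - ρ) * B.coeff k‖
        ≤ max ‖(X * (A - B)).coeff k - ρ * (A - B).coeff k‖ ‖(w - ρ) * B.coeff k‖ :=
          norm_add_le_max _ _
    _ < 1 := max_lt (lt_of_le_of_lt (aux_nsub_le_max _ _) (max_lt h1 h2)) h3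

lemma aux_pow_sub {u v : Cp} (hu : ‖u‖ ≤ 1) (hv : ‖v‖ ≤ 1) (N : ℕ) :
    ‖u ^ N - v ^ N‖ ≤ ‖u - v‖ := by
  rw [← geom_sum₂_mul u v N, norm_mul]
  have hg : ‖∑ i ∈ Finset.range N, u ^ i * v ^ (N - 1 - i)‖ ≤ 1 := by
    apply norm_sum_le_of_forall_le_of_nonneg zero_le_one
    intro i _
    rw [norm_mul, norm_pow, norm_pow]
    exact mul_le_one₀ (pow_le_one₀ (norm_nonneg u) hu) (pow_nonneg (norm_nonneg v) _)
      (pow_le_one₀ (norm_nonneg v) hv)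
  calc ‖∑ i ∈ Finset.range N, u ^ i * v ^ (N - 1 - i)‖ * ‖u - v‖
      ≤ 1 * ‖u - v‖ := mul_le_mul_of_nonneg_right hg (norm_nonneg _)
  _ = ‖u - v‖ := one_mul _

end Poly


section Aux3
variable {p : ℕ} [Fact p.Prime] {Cp : Type*} [NormedField Cp] [IsUltrametricDist Cp]
  [Algebra ℚ_[p] Cp]

lemma aux_int_approx (a : ℚ_[p]) (ha : ‖a‖ ≤ 1) : ∃ z : ℤ, ‖a - z‖ < 1 := by
  set x : ℤ_[p] := ⟨a, ha⟩ with hx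
  have hmem := PadicInt.sub_zmodRepr_mem x
  rw [PadicInt.maximalIdeal_eq_span_p, Ideal.mem_span_singleton] at hmem
  obtain ⟨y, hy⟩ := hmem
  refine ⟨(x.zmodRepr : ℤ), ?_⟩
  have h1 : ‖x - (x.zmodRepr : ℤ_[p])‖ < 1 := by
    rw [hy, norm_mul]
    calc ‖(p : ℤ_[p])‖ * ‖y‖ ≤ ‖(p : ℤ_[p])‖ * 1 :=
      mul_le_mul_of_nonneg_left y.norm_le_one (norm_nonneg _)
    _ = ‖(p : ℤ_[p])‖ := mul_one _
    _ < 1 := by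
        rw [PadicInt.norm_p]
        have := (Fact.out : p.Prime).one_lt
        rw [inv_lt_one_iff₀]
        right
        exact_mod_cast this
  have h2 : ((x - (x.zmodRepr : ℤ_[p]) : ℤ_[p]) : ℚ_[p]) = a - ((x.zmodRepr : ℤ) : ℚ_[p]) := by
    push_cast
    rfl
  rw [← h2]
  rw [← PadicInt.norm_def]
  exact h1

lemma aux_choose_not_dvd (a m : ℕ) (hm : ¬ p ∣ m) : ¬ p ∣ (p ^ a * m).choose (p ^ a) := by
  induction a with
  | zero => simpa [Nat.choose_one_right] using hm
  | succ a ih =>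
    intro hdvd
    have h := Choose.choose_modEq_choose_mod_mul_choose_div_nat
      (n := p ^ (a + 1) * m) (k := p ^ (a + 1)) (p := p)
    have hp1 : 0 < p := (Fact.out : p.Prime).pos
    have hn : p ^ (a + 1) * m = p * (p ^ a * m) := by ring
    have hk : p ^ (a + 1) = p * p ^ a := by ring
    have hnmod : (p ^ (a + 1) * m) % p = 0 := by rw [hn]; exact Nat.mul_mod_right p _
    have hkmod : (p ^ (a + 1)) % p = 0 := by rw [hk]; exact Nat.mul_mod_right p _
    have hndiv : (p ^ (a + 1) * m) / p = p ^ a * m := by rw [hn]; exact Nat.mul_div_cancel_left _ hp1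
    have hkdiv : (p ^ (a + 1)) / p = p ^ a := by rw [hk]; exact Nat.mul_div_cancel_left _ hp1
    rw [hnmod, hkmod, hndiv, hkdiv, Nat.choose_zero_right, one_mul] at h
    have h0 : (p ^ (a + 1) * m).choose (p ^ (a + 1)) ≡ 0 [MOD p] :=
      (Nat.modEq_zero_iff_dvd).mpr hdvd
    exact ih ((Nat.modEq_zero_iff_dvd).mp (h.symm.trans h0))

variable [IsAlgClosed Cp]

lemma aux_map_minpoly_eq_prod (K : Type*) [Field K] [Algebra K Cp] (w : Cp)
    (hi : IsIntegral K w) :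
    (minpoly K w).map (algebraMap K Cp)
      = ((((minpoly K w).map (algebraMap K Cp)).roots).map (fun ρ => X - C ρ)).prod
    ∧ Multiset.card (((minpoly K w).map (algebraMap K Cp)).roots)
      = (minpoly K w).natDegree := by
  have hs := IsAlgClosed.splits ((minpoly K w).map (algebraMap K Cp))
  constructor
  · exact hs.eq_prod_roots_of_monic ((minpoly.monic hi).map _)
  · have hcard := hs.natDegree_eq_card_roots.symm
    rwa [Polynomial.natDegree_map] at hcard

lemma aux_root_conj (halg : Algebra.IsAlgebraic ℚ_[p] Cp)
    (E : IntermediateField ℚ_[p] Cp) (w ρ : Cp)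
    (hρ : ρ ∈ ((minpoly (↥E) w).map (algebraMap (↥E) Cp)).roots) :
    ∃ σ : Cp ≃ₐ[↥E] Cp, σ w = ρ := by
  haveI := halg
  haveI : Algebra.IsAlgebraic (↥E) Cp := Algebra.IsAlgebraic.tower_top (K := ℚ_[p]) (↥E)
  haveI : NoZeroSMulDivisors (↥E) Cp :=
    inferInstance
  haveI : IsAlgClosure (↥E) Cp := ⟨inferInstance, inferInstance⟩
  haveI : Normal (↥E) Cp := IsAlgClosure.normal (↥E) Cp
  have h_ev : (Polynomial.aeval ρ) (minpoly (↥E) w) = 0 := by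
    have h := (Polynomial.mem_roots'.mp hρ).2
    rwa [Polynomial.IsRoot, Polynomial.eval_map, ← Polynomial.aeval_def] at h
  exact minpoly.exists_algEquiv_of_root' (Algebra.IsAlgebraic.isAlgebraic w) h_ev

lemma aux_root_conj0 (halg : Algebra.IsAlgebraic ℚ_[p] Cp) (w ρ : Cp)
    (hρ : ρ ∈ ((minpoly ℚ_[p] w).map (algebraMap ℚ_[p] Cp)).roots) :
    ∃ σ : Cp ≃ₐ[ℚ_[p]] Cp, σ w = ρ := by
  haveI : IsAlgClosure ℚ_[p] Cp := ⟨inferInstance, halg⟩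
  haveI : Normal ℚ_[p] Cp := IsAlgClosure.normal ℚ_[p] Cp
  have h_ev : (Polynomial.aeval ρ) (minpoly ℚ_[p] w) = 0 := by
    have h := (Polynomial.mem_roots'.mp hρ).2
    rwa [Polynomial.IsRoot, Polynomial.eval_map, ← Polynomial.aeval_def] at h
  exact minpoly.exists_algEquiv_of_root' (halg.isAlgebraic w) h_ev

end Aux3

section Ball
variable (Cp : Type*) [NormedField Cp] [IsUltrametricDist Cp]

def ballSubring : Subring Cp where
  carrier := {z : Cp | ‖z‖ ≤ 1}
  mul_mem' := fun {a b} ha hb => by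
    simp only [Set.mem_setOf_eq] at *
    rw [norm_mul]
    exact mul_le_one₀ ha (norm_nonneg _) hb
  one_mem' := by simp
  add_mem' := fun {a b} ha hb => by
    simp only [Set.mem_setOf_eq] at *
    exact le_trans (IsUltrametricDist.norm_add_le_max _ _) (max_le ha hb)
  zero_mem' := by simp
  neg_mem' := fun {a} ha => by
    simp only [Set.mem_setOf_eq] at *
    rwa [norm_neg]

def ballIdeal : Ideal (ballSubring Cp) where
  carrier := {z : ballSubring Cp | ‖(z : Cp)‖ < 1}
  add_mem' := fun {a b} ha hb => by
    simp only [Set.mem_setOf_eq] at *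
    push_cast
    exact lt_of_le_of_lt (IsUltrametricDist.norm_add_le_max _ _) (max_lt ha hb)
  zero_mem' := by simp
  smul_mem' := fun c z hz => by
    simp only [Set.mem_setOf_eq, smul_eq_mul] at *
    push_cast
    rw [norm_mul]
    calc ‖(c : Cp)‖ * ‖(z : Cp)‖ ≤ 1 * ‖(z : Cp)‖ :=
      mul_le_mul_of_nonneg_right c.2 (norm_nonneg _)
    _ = ‖(z : Cp)‖ := one_mul _
    _ < 1 := hz

lemma mem_ballIdeal_iff (z : ballSubring Cp) : z ∈ ballIdeal Cp ↔ ‖(z : Cp)‖ < 1 := Iff.rfl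

end Ball

section Aux4
variable {p : ℕ} [Fact p.Prime] {Cp : Type*} [NormedField Cp] [IsUltrametricDist Cp]
  [Algebra ℚ_[p] Cp] [IsAlgClosed Cp]

lemma aux_pow_p_inj {k : Type*} [CommRing k] [IsReduced k] (hp : p.Prime) [CharP k p] :
    ∀ (i : ℕ) (x y : k), x ^ p ^ i = y ^ p ^ i → x = y := by
  haveI : ExpChar k p := ExpChar.prime hp
  intro i
  induction i with
  | zero => intro x y h; simpa using h
  | succ i ih =>
    intro x y h
    have h' : frobenius k p (x ^ p ^ i) = frobenius k p (y ^ p ^ i) := by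
      rw [frobenius_def, frobenius_def, ← pow_mul, ← pow_mul, ← pow_succ]
      exact h
    exact ih x y (frobenius_inj k p h')

lemma aux_minpoly_coeff_le (halg : Algebra.IsAlgebraic ℚ_[p] Cp)
    (hnorm : ∀ x : ℚ_[p], ‖algebraMap ℚ_[p] Cp x‖ = ‖x‖)
    (w : Cp) (hw : ‖w‖ ≤ 1) (i : ℕ) : ‖(minpoly ℚ_[p] w).coeff i‖ ≤ 1 := by
  have hint : IsIntegral ℚ_[p] w := (halg.isAlgebraic w).isIntegral
  obtain ⟨hprod, _⟩ := aux_map_minpoly_eq_prod ℚ_[p] w hint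
  have hroots : ∀ ρ ∈ ((minpoly ℚ_[p] w).map (algebraMap ℚ_[p] Cp)).roots, ‖ρ‖ ≤ 1 := by
    intro ρ hρ
    obtain ⟨σ, hσ⟩ := aux_root_conj0 halg w ρ hρ
    rw [← hσ, aux_norm_equiv halg hnorm σ w]
    exact hw
  have hb := aux_coeff_le _ hroots i
  rw [← hprod, Polynomial.coeff_map] at hb
  rwa [hnorm] at hb

lemma aux_residue (halg : Algebra.IsAlgebraic ℚ_[p] Cp)
    (hnorm : ∀ x : ℚ_[p], ‖algebraMap ℚ_[p] Cp x‖ = ‖x‖)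
    (w : Cp) (hw : ‖w‖ ≤ 1) : ∃ d : ℕ, 0 < d ∧ ‖w ^ p ^ d - w‖ < 1 := by
  have hp : p.Prime := Fact.out
  haveI : NeZero p := ⟨hp.pos.ne'⟩
  have hint : IsIntegral ℚ_[p] w := (halg.isAlgebraic w).isIntegral
  set g := minpoly ℚ_[p] w with hg
  set n := g.natDegree with hn
  have hn0 : 0 < n := minpoly.natDegree_pos hint
  have hgc : ∀ i, ‖g.coeff i‖ ≤ 1 := aux_minpoly_coeff_le halg hnorm w hw
  -- integer approximations of the coefficients
  have hz : ∀ i, ∃ z : ℤ, ‖g.coeff i - z‖ < 1 := fun i => aux_int_approx _ (hgc i)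
  choose zi hzi using hz
  -- the integer polynomial
  set q : Polynomial ℤ := X ^ n + ∑ i ∈ Finset.range n, C (zi i) * X ^ i with hq
  have hqdeglt : (∑ i ∈ Finset.range n, C (zi i) * X ^ i : Polynomial ℤ).degree < (n : ℕ) := by
    apply lt_of_le_of_lt (Polynomial.degree_sum_le _ _)
    rw [Finset.sup_lt_iff (by exact_mod_cast WithBot.bot_lt_coe n)]
    intro i hi
    exact lt_of_le_of_lt (Polynomial.degree_C_mul_X_pow_le _ _)
      (by exact_mod_cast Finset.mem_range.mp hi)
  have hqmonic : q.Monic := Polynomial.monic_X_pow_add hqdeglt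
  have hqdeg : q.natDegree = n := by
    have hdeg : q.degree = n := by
      rw [hq]
      rw [Polynomial.degree_add_eq_left_of_degree_lt (by rwa [Polynomial.degree_X_pow])]
      exact Polynomial.degree_X_pow n
    exact Polynomial.natDegree_eq_of_degree_eq_some hdeg
  have hqcoeff : ∀ i, i < n → q.coeff i = zi i := by
    intro i hi
    rw [hq, Polynomial.coeff_add, Polynomial.coeff_X_pow, if_neg (Nat.ne_of_lt hi),
      Polynomial.finset_sum_coeff]
    simp only [Polynomial.coeff_C_mul, Polynomial.coeff_X_pow]
    rw [Finset.sum_eq_single i (fun j _ hji => by rw [if_neg (fun h => hji h.symm), mul_zero])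
      (fun h => absurd (Finset.mem_range.mpr hi) h)]
    simp
  have hqn : q.coeff n = 1 := by
    have := hqmonic
    rw [Polynomial.Monic, Polynomial.leadingCoeff, hqdeg] at this
    exact this
  set O : Subring Cp := ballSubring Cp with hO
  set m : Ideal O := ballIdeal Cp with hm
  haveI hmax : m.IsMaximal := by
    rw [Ideal.isMaximal_iff]
    constructor
    · rw [hm, mem_ballIdeal_iff]
      rw [OneMemClass.coe_one, norm_one]
      exact lt_irrefl 1
    · intro J x hmJ hxm hxJ
      rw [hm, mem_ballIdeal_iff] at hxm
      have hx1 : ‖(x : Cp)‖ = 1 := by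
        refine le_antisymm x.2 ?_
        by_contra hlt
        push_neg at hlt
        exact hxm hlt
      have hx0 : (x : Cp) ≠ 0 := by
        intro h
        rw [h, norm_zero] at hx1
        exact zero_ne_one hx1
      have hinv : ‖(x : Cp)⁻¹‖ ≤ 1 := by
        rw [norm_inv, hx1]
        norm_num
      set xinv : O := ⟨(x : Cp)⁻¹, hinv⟩ with hxinv
      have h1 : xinv * x = 1 := by
        apply Subtype.ext
        push_cast
        exact inv_mul_cancel₀ hx0
      rw [← h1]
      exact J.mul_mem_left xinv hxJ
  letI : Field (O ⧸ m) := Ideal.Quotient.field m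
  have hpm : ((p : ℕ) : O) ∈ m := by
    rw [hm, mem_ballIdeal_iff]
    have h1 : (((p : ℕ) : O) : Cp) = ((p : ℕ) : Cp) := by push_cast; rfl
    have h2 : ((p : ℕ) : Cp) = algebraMap ℚ_[p] Cp ((p : ℕ) : ℚ_[p]) := by
      rw [map_natCast]
    rw [h1, h2, hnorm]
    exact Padic.norm_p_lt_one
  have hp0 : ((p : ℕ) : O ⧸ m) = 0 := by
    rw [show ((p : ℕ) : O ⧸ m) = Ideal.Quotient.mk m ((p : ℕ) : O) from (map_natCast _ p).symm]
    exact (Ideal.Quotient.eq_zero_iff_mem).mpr hpm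
  haveI : CharP (O ⧸ m) p := (CharP.charP_iff_prime_eq_zero hp).mpr hp0
  letI : Algebra (ZMod p) (O ⧸ m) := ZMod.algebra _ p
  -- the element and its residue
  set wO : O := ⟨w, hw⟩ with hwO
  set wbar : O ⧸ m := Ideal.Quotient.mk m wO with hwbar
  -- q evaluated at wO lies in m
  set qO : Polynomial O := q.map (Int.castRingHom O) with hqO
  have hsubint : (O.subtype.comp (Int.castRingHom O)) = Int.castRingHom Cp :=
    Subsingleton.elim _ _
  have hval : O.subtype (qO.eval wO)
      = ∑ i ∈ Finset.range (n + 1), ((q.coeff i : ℤ) : Cp) * w ^ i := by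
    rw [hqO, Polynomial.eval_map, Polynomial.hom_eval₂, hsubint]
    rw [Polynomial.eval₂_eq_sum_range' (Int.castRingHom Cp) (lt_of_le_of_lt hqdeg.le (Nat.lt_succ_self n)) _]
    simp only [eq_intCast]
    rfl
  have hgsum : ∑ i ∈ Finset.range (n + 1), algebraMap ℚ_[p] Cp (g.coeff i) * w ^ i = 0 := by
    have h0 : (Polynomial.aeval w) g = 0 := minpoly.aeval _ _
    rw [Polynomial.aeval_def,
      Polynomial.eval₂_eq_sum_range' (algebraMap ℚ_[p] Cp) (Nat.lt_succ_self n) w] at h0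
    exact h0
  have hdiff : O.subtype (qO.eval wO)
      = ∑ i ∈ Finset.range (n + 1),
          (((q.coeff i : ℤ) : Cp) - algebraMap ℚ_[p] Cp (g.coeff i)) * w ^ i := by
    rw [hval, ← sub_zero (∑ i ∈ Finset.range (n + 1), ((q.coeff i : ℤ) : Cp) * w ^ i), ← hgsum,
      ← Finset.sum_sub_distrib]
    congr 1
    funext i
    rw [sub_mul]
  have hterms : ∀ i ∈ Finset.range (n + 1),
      ‖(((q.coeff i : ℤ) : Cp) - algebraMap ℚ_[p] Cp (g.coeff i)) * w ^ i‖ < 1 := by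
    intro i hi
    rw [Finset.mem_range, Nat.lt_succ_iff] at hi
    have hwi : ‖w ^ i‖ ≤ 1 := by
      rw [norm_pow]
      exact pow_le_one₀ (norm_nonneg w) hw
    rcases lt_or_eq_of_le hi with hi' | hi'
    · have hqc := hqcoeff i hi'
      have key : ‖((q.coeff i : ℤ) : Cp) - algebraMap ℚ_[p] Cp (g.coeff i)‖ < 1 := by
        rw [hqc]
        have h1 : ((zi i : ℤ) : Cp) = algebraMap ℚ_[p] Cp ((zi i : ℤ) : ℚ_[p]) := by
          rw [map_intCast]
        rw [h1, ← map_sub, hnorm, norm_sub_rev]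
        exact hzi i
      rw [norm_mul]
      calc ‖((q.coeff i : ℤ) : Cp) - algebraMap ℚ_[p] Cp (g.coeff i)‖ * ‖w ^ i‖
          ≤ ‖((q.coeff i : ℤ) : Cp) - algebraMap ℚ_[p] Cp (g.coeff i)‖ * 1 :=
            mul_le_mul_of_nonneg_left hwi (norm_nonneg _)
      _ = _ := mul_one _
      _ < 1 := key
    · have hgn : g.coeff n = 1 := by
        have := (minpoly.monic hint).coeff_natDegree
        rwa [← hg, ← hn] at this
      rw [hi', hqn, hgn, map_one, Int.cast_one, sub_self, zero_mul, norm_zero]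
      exact one_pos
  have hqeval : qO.eval wO ∈ m := by
    rw [hm, mem_ballIdeal_iff]
    show ‖O.subtype (qO.eval wO)‖ < 1
    rw [hdiff]
    obtain ⟨i, hi1, hi2⟩ := exists_norm_finset_sum_le (Finset.range (n + 1))
      (fun i => (((q.coeff i : ℤ) : Cp) - algebraMap ℚ_[p] Cp (g.coeff i)) * w ^ i)
    exact lt_of_le_of_lt hi2 (hterms i (hi1 ⟨0, Finset.mem_range.mpr (Nat.succ_pos n)⟩))
  -- wbar is integral over ZMod p
  have hintbar : IsIntegral (ZMod p) wbar := by
    refine ⟨q.map (Int.castRingHom (ZMod p)), hqmonic.map _, ?_⟩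
    rw [Polynomial.eval₂_map]
    have h1 : (algebraMap (ZMod p) (O ⧸ m)).comp (Int.castRingHom (ZMod p))
        = Int.castRingHom (O ⧸ m) := Subsingleton.elim _ _
    have h2 : Int.castRingHom (O ⧸ m)
        = (Ideal.Quotient.mk m).comp (Int.castRingHom O) := Subsingleton.elim _ _
    rw [h1, h2, hwbar, ← Polynomial.hom_eval₂, ← Polynomial.eval_map, ← hqO]
    exact (Ideal.Quotient.eq_zero_iff_mem).mpr hqeval
  -- the adjoined subalgebra is finite
  haveI hfin1 : Module.Finite (ZMod p) (Algebra.adjoin (ZMod p) {wbar}) :=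
    Module.Finite.iff_fg.mpr hintbar.fg_adjoin_singleton
  haveI hfin2 : Finite ↥(Algebra.adjoin (ZMod p) {wbar}) := Module.finite_of_finite (ZMod p)
  -- pigeonhole on Frobenius powers
  have hmem : ∀ j : ℕ, wbar ^ p ^ j ∈ Algebra.adjoin (ZMod p) {wbar} :=
    fun j => pow_mem (Algebra.subset_adjoin (Set.mem_singleton _)) _
  obtain ⟨i, j, hij, heq⟩ := Finite.exists_ne_map_eq_of_infinite
    (fun j : ℕ => (⟨wbar ^ p ^ j, hmem j⟩ : ↥(Algebra.adjoin (ZMod p) {wbar})))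
  have key : ∀ i j : ℕ, i < j → wbar ^ p ^ i = wbar ^ p ^ j →
      ∃ d : ℕ, 0 < d ∧ ‖w ^ p ^ d - w‖ < 1 := by
    intro i j hlt he
    set d := j - i with hd
    have hd0 : 0 < d := Nat.sub_pos_of_lt hlt
    have hji : j = d + i := by omega
    have he2 : wbar ^ p ^ i = (wbar ^ p ^ d) ^ p ^ i := by
      rw [← pow_mul, ← pow_add, ← hji]
      exact he
    have hw2 : wbar = wbar ^ p ^ d := aux_pow_p_inj hp i _ _ he2
    refine ⟨d, hd0, ?_⟩
    have hmm : wO ^ p ^ d - wO ∈ m := by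
      rw [← Ideal.Quotient.eq_zero_iff_mem, map_sub, map_pow]
      rw [← hwbar, ← hw2]
      exact sub_self _
    rw [hm, mem_ballIdeal_iff] at hmm
    have : ‖((wO ^ p ^ d - wO : O) : Cp)‖ < 1 := hmm
    rwa [show ((wO ^ p ^ d - wO : O) : Cp) = w ^ p ^ d - w by push_cast; rfl] at this
  have heq' : wbar ^ p ^ i = wbar ^ p ^ j := by
    have := congrArg Subtype.val heq
    exact this
  rcases hij.lt_or_gt with h | h
  · exact key i j h heq'
  · exact key j i h heq'.symm

end Aux4


section Key
variable {p : ℕ} [Fact p.Prime] {Cp : Type*} [NormedField Cp] [IsUltrametricDist Cp]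
  [Algebra ℚ_[p] Cp] [IsAlgClosed Cp]

lemma aux_fix (E : IntermediateField ℚ_[p] Cp) (σ : Cp ≃ₐ[↥E] Cp) {e : Cp} (he : e ∈ E) :
    σ e = e := by
  have h := σ.commutes ⟨e, he⟩
  rwa [IntermediateField.algebraMap_apply] at h

lemma aux_key (halg : Algebra.IsAlgebraic ℚ_[p] Cp)
    (hnorm : ∀ x : ℚ_[p], ‖algebraMap ℚ_[p] Cp x‖ = ‖x‖)
    (E F : IntermediateField ℚ_[p] Cp) (hEF : E ≤ F)
    (hle : valueGroup p Cp F ≤ valueGroup p Cp E)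
    (x : Cp) (hxF : x ∈ F) (y : Cp) (hyE : y ∈ E)
    (hmin : ∀ e ∈ E, ‖x - y‖ ≤ ‖x - e‖)
    (hconj : ∀ σ : Cp ≃ₐ[↥E] Cp, ‖σ x - x‖ < ‖x - y‖) : False := by
  have hp : p.Prime := Fact.out
  have hδpos : 0 < ‖x - y‖ := by
    have := hconj AlgEquiv.refl
    simpa using lt_of_le_of_lt (norm_nonneg _) this
  have hz0 : x - y ≠ 0 := by
    intro h
    rw [h, norm_zero] at hδpos
    exact lt_irrefl _ hδpos
  have hzF : x - y ∈ F := sub_mem hxF (hEF hyE)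
  obtain ⟨c, hcE, hc⟩ := aux_valueGroup E F hle hzF hz0
  have hcpos : 0 < ‖c‖ := by rw [hc]; exact hδpos
  have hc0 : c ≠ 0 := by
    intro h
    rw [h, norm_zero] at hcpos
    exact lt_irrefl _ hcpos
  set w : Cp := (x - y) / c with hwdef
  have hwnorm : ‖w‖ = 1 := by
    rw [hwdef, norm_div, hc]
    exact div_self hδpos.ne'
  have hwle : ‖w‖ ≤ 1 := le_of_eq hwnorm
  have hcw : c * w = x - y := by
    rw [hwdef]
    field_simp
  haveI := halg
  haveI : Algebra.IsAlgebraic (↥E) Cp := Algebra.IsAlgebraic.tower_top (K := ℚ_[p]) (↥E)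
  have hintE : IsIntegral (↥E) w := (Algebra.IsAlgebraic.isAlgebraic w).isIntegral
  obtain ⟨hprod, hcard⟩ := aux_map_minpoly_eq_prod (↥E) w hintE
  set P := (minpoly (↥E) w).map (algebraMap (↥E) Cp) with hP
  set n := (minpoly (↥E) w).natDegree with hn
  have hn0 : 0 < n := minpoly.natDegree_pos hintE
  -- roots of the minimal polynomial are close to w
  have hroots : ∀ ρ ∈ P.roots, ‖ρ‖ ≤ 1 ∧ ‖ρ - w‖ < 1 := by
    intro ρ hρ
    obtain ⟨σ, hσ⟩ := aux_root_conj halg E w ρ hρ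
    have hσw : ‖σ w‖ = ‖w‖ := by
      have h1 : (AlgEquiv.restrictScalars ℚ_[p] σ) w = σ w := rfl
      rw [← h1]
      exact aux_norm_equiv halg hnorm (AlgEquiv.restrictScalars ℚ_[p] σ) w
    constructor
    · rw [← hσ, hσw, hwnorm]
    · rw [← hσ]
      have hσc : σ w - w = (σ x - x) / c := by
        rw [hwdef, div_eq_mul_inv, div_eq_mul_inv, map_mul, map_sub, map_inv₀,
          aux_fix E σ hyE, aux_fix E σ hcE]
        ring
      rw [hσc, norm_div, hc]
      exact (div_lt_one hδpos).mpr (hconj σ)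
  -- p-adic valuation bookkeeping
  set a := n.factorization p with ha
  set m' := n / p ^ a with hm'
  have hfact : p ^ a * m' = n := Nat.ordProj_mul_ordCompl_eq_self n p
  have hm'nd : ¬ p ∣ m' := Nat.not_dvd_ordCompl hp hn0.ne'
  have hpa_le : p ^ a ≤ n := Nat.ordProj_le p hn0.ne'
  set k₀ := n - p ^ a with hk₀
  -- the binomial coefficient of (X - C w)^n
  have hbin : ((X - C w) ^ n).coeff k₀
      = (-1) ^ (p ^ a) * (n.choose (p ^ a) : Cp) * w ^ (p ^ a) := by
    have h1 : (X - C w : Polynomial Cp) = X + C (-w) := by rw [map_neg, sub_eq_add_neg]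
    rw [h1, Polynomial.coeff_X_add_C_pow]
    rw [hk₀, Nat.sub_sub_self hpa_le, Nat.choose_symm hpa_le, neg_pow]
    ring
  -- the key coefficient congruence
  have hclose : ‖P.coeff k₀ - ((X - C w) ^ n).coeff k₀‖ < 1 := by
    have h := aux_coeff_close w hwle P.roots hroots k₀
    rwa [← hprod, hcard] at h
  -- the element s of E
  set χ : Cp := (n.choose (p ^ a) : Cp) with hχ
  have hχnd : ¬ p ∣ n.choose (p ^ a) := by
    have := aux_choose_not_dvd (p := p) a m' hm'nd
    rwa [hfact] at this
  have hχnorm : ‖χ‖ = 1 := by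
    have h1 : χ = algebraMap ℚ_[p] Cp ((n.choose (p ^ a) : ℕ) : ℚ_[p]) := by
      rw [map_natCast]
    rw [h1, hnorm]
    have h2 : (((n.choose (p ^ a) : ℕ) : ℚ_[p])) = (((n.choose (p ^ a) : ℕ) : ℤ) : ℚ_[p]) := by
      push_cast
      ring
    rw [h2]
    refine le_antisymm (Padic.norm_int_le_one _) ?_
    by_contra hlt
    push_neg at hlt
    rw [Padic.norm_intCast_lt_one_iff] at hlt
    exact hχnd (Int.ofNat_dvd.mp hlt)
  set β : Cp := (-1) ^ (p ^ a) * χ with hβ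
  have hβnorm : ‖β‖ = 1 := by
    rw [hβ, norm_mul, norm_pow, norm_neg, norm_one, one_pow, one_mul, hχnorm]
  have hβ0 : β ≠ 0 := by
    intro h
    rw [h, norm_zero] at hβnorm
    exact zero_ne_one hβnorm
  have hβE : β ∈ E := by
    refine mul_mem (pow_mem (neg_mem (one_mem E)) _) ?_
    exact natCast_mem E _
  set s₀ : Cp := algebraMap (↥E) Cp ((minpoly (↥E) w).coeff k₀) with hs₀
  have hs₀E : s₀ ∈ E := by
    rw [hs₀, IntermediateField.algebraMap_apply]
    exact SetLike.coe_mem _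
  have hs₀P : P.coeff k₀ = s₀ := by rw [hP, Polynomial.coeff_map]
  set s : Cp := s₀ * β⁻¹ with hs
  have hsE : s ∈ E := mul_mem hs₀E (inv_mem hβE)
  have hkey1 : ‖s - w ^ p ^ a‖ < 1 := by
    have heq : s - w ^ p ^ a = (s₀ - β * w ^ p ^ a) * β⁻¹ := by
      rw [hs, sub_mul]
      congr 1
      rw [mul_comm β, mul_assoc, mul_inv_cancel₀ hβ0, mul_one]
    rw [heq, norm_mul, norm_inv, hβnorm, inv_one, mul_one]
    have h2 : β * w ^ p ^ a = ((X - C w) ^ n).coeff k₀ := by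
      rw [hbin]
    rw [h2, ← hs₀P]
    exact hclose
  have hsle : ‖s‖ ≤ 1 := by
    have h1 : s = (s - w ^ p ^ a) + w ^ p ^ a := by ring
    rw [h1]
    refine le_trans (norm_add_le_max _ _) (max_le hkey1.le ?_)
    rw [norm_pow, hwnorm, one_pow]
  -- the Frobenius stabilization
  obtain ⟨d, hd0, hdlt⟩ := aux_residue halg hnorm w hwle
  have hwp : ∀ N : ℕ, ‖w ^ N‖ ≤ 1 := by
    intro N
    rw [norm_pow, hwnorm, one_pow]
  have claim1 : ∀ k : ℕ, ‖w ^ p ^ (k * d) - w‖ < 1 := by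
    intro k
    induction k with
    | zero => simpa using one_pos
    | succ k ih =>
      have harith : w ^ p ^ ((k + 1) * d) = (w ^ p ^ (k * d)) ^ p ^ d := by
        rw [← pow_mul, ← pow_add]
        ring_nf
      have h1 : ‖w ^ p ^ ((k + 1) * d) - w ^ p ^ d‖ < 1 := by
        rw [harith]
        exact lt_of_le_of_lt (aux_pow_sub (hwp _) hwle _) ih
      have h2 : w ^ p ^ ((k + 1) * d) - w
          = (w ^ p ^ ((k + 1) * d) - w ^ p ^ d) + (w ^ p ^ d - w) := by ring
      rw [h2]
      exact lt_of_le_of_lt (norm_add_le_max _ _) (max_lt h1 hdlt)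
  set j := a * d - a with hj
  have haj : a + j = a * d := by
    have : a ≤ a * d := Nat.le_mul_of_pos_right a hd0
    omega
  set e : Cp := s ^ p ^ j with he
  have heE : e ∈ E := pow_mem hsE _
  have hkey2 : ‖e - w ^ p ^ (a * d)‖ < 1 := by
    have h1 : w ^ p ^ (a * d) = (w ^ p ^ a) ^ p ^ j := by
      rw [← pow_mul, ← pow_add, haj]
    rw [he, h1]
    exact lt_of_le_of_lt (aux_pow_sub hsle (hwp _) _) hkey1
  have hkey3 : ‖e - w‖ < 1 := by
    have h1 : e - w = (e - w ^ p ^ (a * d)) + (w ^ p ^ (a * d) - w) := by ring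
    rw [h1]
    exact lt_of_le_of_lt (norm_add_le_max _ _) (max_lt hkey2 (claim1 a))
  -- the contradiction
  set e' : Cp := y + c * e with he'
  have he'E : e' ∈ E := add_mem hyE (mul_mem hcE heE)
  have hfinal : ‖x - e'‖ < ‖x - y‖ := by
    have h1 : x - e' = c * (w - e) := by
      rw [he', mul_sub, hcw]
      ring
    rw [h1, norm_mul, hc]
    have hk3' : ‖w - e‖ < 1 := by rwa [norm_sub_rev] at hkey3
    calc ‖x - y‖ * ‖w - e‖ < ‖x - y‖ * 1 :=
      mul_lt_mul_of_pos_left hk3' hδpos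
    _ = ‖x - y‖ := mul_one _
  exact absurd (hmin e' he'E) (not_le.mpr hfinal)

end Key

/-- if a disk `D` defined over `E` meets a finite unramified extension `F`
of `E`, then it meets `E`. -/
theorem statement_1 (p : ℕ) [Fact p.Prime] (Cp : Type*) [NormedField Cp]
    [IsUltrametricDist Cp] [Algebra ℚ_[p] Cp] [IsAlgClosed Cp]
    (halg : Algebra.IsAlgebraic ℚ_[p] Cp)
    (hnorm : ∀ x : ℚ_[p], ‖algebraMap ℚ_[p] Cp x‖ = ‖x‖)
    (E : IntermediateField ℚ_[p] Cp) [FiniteDimensional ℚ_[p] E]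
    (D : Set Cp) (hD : IsDisk D)
    (hinv : ∀ σ : Cp ≃ₐ[E] Cp, σ '' D = D)
    (F : IntermediateField ℚ_[p] Cp) (hEF : E ≤ F) [FiniteDimensional ℚ_[p] F]
    (hunr : ramIdx p Cp E F = 1)
    (hFD : ((F : Set Cp) ∩ D).Nonempty) :
    ((E : Set Cp) ∩ D).Nonempty := by
  obtain ⟨x, hxF, hxD⟩ := hFD
  have hle : valueGroup p Cp F ≤ valueGroup p Cp E := Subgroup.relIndex_eq_one.mp hunr
  obtain ⟨y, hyE, hmin⟩ := aux_exists_min hnorm E x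
  by_cases hyD : y ∈ D
  · exact ⟨y, hyE, hyD⟩
  exfalso
  have hσD : ∀ σ : Cp ≃ₐ[E] Cp, σ x ∈ D := by
    intro σ
    rw [← hinv σ]
    exact Set.mem_image_of_mem σ hxD
  obtain ⟨a, r, hr, hDc | hDo⟩ := hD
  · -- closed disk
    have hxa : ‖x - a‖ ≤ r := by rw [hDc] at hxD; exact hxD
    have hya : r < ‖y - a‖ := by
      rw [hDc] at hyD
      exact not_le.mp hyD
    have hxy : r < ‖x - y‖ := by
      have h1 : ‖y - a‖ ≤ max ‖y - x‖ ‖x - a‖ := by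
        have : y - a = (y - x) + (x - a) := by ring
        rw [this]
        exact norm_add_le_max _ _
      rcases max_cases ‖y - x‖ ‖x - a‖ with ⟨hmax, _⟩ | ⟨hmax, _⟩
      · rw [hmax] at h1
        rw [norm_sub_rev]
        exact lt_of_lt_of_le hya h1
      · rw [hmax] at h1
        exact absurd (le_trans h1 hxa) (not_le.mpr hya)
    refine aux_key halg hnorm E F hEF hle x hxF y hyE hmin ?_
    intro σ
    have hσa : ‖σ x - a‖ ≤ r := by
      have := hσD σ
      rw [hDc] at this
      exact this
    have h2 : ‖σ x - x‖ ≤ r := by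
      have h3 : σ x - x = (σ x - a) - (x - a) := by ring
      rw [h3]
      exact le_trans (aux_nsub_le_max _ _) (max_le hσa hxa)
    exact lt_of_le_of_lt h2 hxy
  · -- open disk
    have hxa : ‖x - a‖ < r := by rw [hDo] at hxD; exact hxD
    have hya : r ≤ ‖y - a‖ := by
      rw [hDo] at hyD
      exact not_lt.mp hyD
    have hxy : r ≤ ‖x - y‖ := by
      have h1 : ‖y - a‖ ≤ max ‖y - x‖ ‖x - a‖ := by
        have : y - a = (y - x) + (x - a) := by ring
        rw [this]
        exact norm_add_le_max _ _
      rcases max_cases ‖y - x‖ ‖x - a‖ with ⟨hmax, _⟩ | ⟨hmax, _⟩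
      · rw [hmax] at h1
        rw [norm_sub_rev]
        exact le_trans hya h1
      · rw [hmax] at h1
        exact absurd (lt_of_le_of_lt (le_trans hya h1) hxa) (lt_irrefl r)
    refine aux_key halg hnorm E F hEF hle x hxF y hyE hmin ?_
    intro σ
    have hσa : ‖σ x - a‖ < r := by
      have := hσD σ
      rw [hDo] at this
      exact this
    have h2 : ‖σ x - x‖ < r := by
      have h3 : σ x - x = (σ x - a) - (x - a) := by ring
      rw [h3]
      exact lt_of_le_of_lt (aux_nsub_le_max _ _) (max_lt hσa hxa)
    exact lt_of_lt_of_le h2 hxy
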